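/- arXiv:1103.5777 — 2 statements merged into one kernel-verified Lean document; each statement's English description precedes it below -/
import Mathlib

section
/- In the ring R = ℤ[a,b]/(aⁿ, Σ_{i=0}^{n-1} aⁿ⁻¹⁻ⁱ(−b)ⁱ), define cᵢ = aⁱ + aⁱ⁻¹b + ... + bⁱ = Σ_{j=0}^{i} aⁱ⁻ʲbʲ. Then c_{n-1} = 2·(aⁿ⁻¹ + aⁿ⁻³b² + aⁿ⁻⁵b⁴ + ...), i.e., c_{n-1} is divisible by 2 in R. -/
theorem c_n_sub_one_divisible_by_two (n : ℕ) (hn : 1 ≤ n) (A : Type*) [CommRing A] (a b : A)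
    (h1 : a ^ n = 0) (h2 : ∑ i ∈ Finset.range n, a ^ (n - 1 - i) * (-b) ^ i = 0) :
    (∑ j ∈ Finset.range n, a ^ (n - 1 - j) * b ^ j)
      = 2 * ∑ i ∈ Finset.range ((n + 1) / 2), a ^ (n - 1 - 2 * i) * b ^ (2 * i) := by
  have key : (∑ j ∈ Finset.range n, a ^ (n - 1 - j) * b ^ j)
      = ∑ j ∈ Finset.range n, a ^ (n - 1 - j) * (b ^ j + (-b) ^ j) := by
    have : ∑ j ∈ Finset.range n, a ^ (n - 1 - j) * (b ^ j + (-b) ^ j)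
        = (∑ j ∈ Finset.range n, a ^ (n - 1 - j) * b ^ j)
          + ∑ j ∈ Finset.range n, a ^ (n - 1 - j) * (-b) ^ j := by
      rw [← Finset.sum_add_distrib]
      exact Finset.sum_congr rfl fun j _ => by ring
    rw [this, h2, add_zero]
  rw [key, Finset.mul_sum]
  rw [← Finset.sum_filter_of_ne (p := fun j => Even j)
    (f := fun j => a ^ (n - 1 - j) * (b ^ j + (-b) ^ j)) (by
      intro j _ hne
      by_contra hodd
      apply hne
      rw [Nat.not_even_iff_odd] at hodd
      show a ^ (n - 1 - j) * (b ^ j + (-b) ^ j) = 0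
      rw [Odd.neg_pow hodd]
      ring)]
  refine Finset.sum_nbij' (fun j => j / 2) (fun i => 2 * i) ?_ ?_ ?_ ?_ ?_
  · intro j hj
    simp only [Finset.mem_filter, Finset.mem_range] at hj ⊢
    omega
  · intro i hi
    simp only [Finset.mem_filter, Finset.mem_range] at hi ⊢
    constructor
    · omega
    · exact even_two_mul i
  · intro j hj
    simp only [Finset.mem_filter, Finset.mem_range] at hj
    obtain ⟨k, hk⟩ := hj.2
    show 2 * (j / 2) = j
    omega
  · intro i _; show (2 * i) / 2 = i; omega
  · intro j hj
    simp only [Finset.mem_filter, Finset.mem_range] at hj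
    obtain ⟨k, hk⟩ := hj.2
    have h2j : 2 * (j / 2) = j := by omega
    rw [h2j]
    have : (-b) ^ j = b ^ j := by
      rw [Even.neg_pow hj.2]
    rw [this]; ring
end

section
/- Let V be a finite-dimensional vector space over 𝔽₂ with a nondegenerate symmetric bilinear form b, σ a b-preserving linear involution, and p: V → V a projector with adjoint p* (b(p v, u) = b(v, p* u)) such that Im p ⊕ (1+σ)V = V^σ = Im p* ⊕ (1+σ)V. Then the subspace Im p is nondegenerate, and hence V = Im p ⊕ (Im p)^⊥. -/
theorem image_projector_nondegenerate (V : Type*) [AddCommGroup V] [Module (ZMod 2) V]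
    [FiniteDimensional (ZMod 2) V]
    (B : LinearMap.BilinForm (ZMod 2) V) (hB : B.Nondegenerate)
    (hsymm : ∀ v u, B v u = B u v)
    (σ : V →ₗ[ZMod 2] V) (hσ2 : ∀ v, σ (σ v) = v)
    (hiso : ∀ v u, B (σ v) (σ u) = B v u)
    (p pstar : V →ₗ[ZMod 2] V) (hp : p ∘ₗ p = p) (hpstar : pstar ∘ₗ pstar = pstar)
    (hadj : ∀ v u, B (p v) u = B v (pstar u))
    (hinf : LinearMap.range p ⊓ LinearMap.range (LinearMap.id + σ) = ⊥)
    (hsup : LinearMap.range p ⊔ LinearMap.range (LinearMap.id + σ)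
      = LinearMap.ker (σ - LinearMap.id))
    (hinf' : LinearMap.range pstar ⊓ LinearMap.range (LinearMap.id + σ) = ⊥)
    (hsup' : LinearMap.range pstar ⊔ LinearMap.range (LinearMap.id + σ)
      = LinearMap.ker (σ - LinearMap.id)) :
    (B.restrict (LinearMap.range p)).Nondegenerate ∧
    IsCompl (LinearMap.range p) (B.orthogonal (LinearMap.range p)) := by
  have hrefl : B.IsRefl := fun v u h => by rw [hsymm]; exact h
  have hnd : (B.restrict (LinearMap.range p)).Nondegenerate := by
    refine (LinearMap.IsRefl.nondegenerate_iff_separatingLeft (B := B.restrict (LinearMap.range p)) (fun a b h => hrefl _ _ h)).mpr ?_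
    rintro ⟨x, y, rfl⟩ hx
    ext
    simp only [Submodule.coe_zero]
    -- every element of range p is σ-fixed
    have hfix : σ (p y) = p y := by
      have h1 : p y ∈ LinearMap.ker (σ - LinearMap.id) := by
        rw [← hsup]; exact Submodule.mem_sup_left ⟨y, rfl⟩
      have h2 := LinearMap.mem_ker.mp h1
      simpa [sub_eq_zero] using h2
    -- B (p y) vanishes on (1+σ)V
    have hrad : ∀ u, B (p y) (u + σ u) = 0 := by
      intro u
      have h1 : B (p y) (σ u) = B (p y) u := by
        conv_rhs => rw [← hiso, hfix]
      simp only [LinearMap.add_apply, LinearMap.id_apply, map_add, h1]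
      rw [← two_smul (ZMod 2)]
      simp [show (2 : ZMod 2) = 0 from rfl]
    have hpp : p (p y) = p y := by
      have := congrArg (fun f => f y) hp; simpa using this
    -- show B (p y) u = 0 for all u
    suffices h : ∀ u, B (p y) u = 0 by
      exact hB.1 (p y) h
    intro u
    have h1 : B (p y) u = B (p y) (pstar u) :=
      calc B (p y) u = B (p (p y)) u := by rw [hpp]
        _ = B (p y) (pstar u) := hadj _ _
    rw [h1]
    have h2 : pstar u ∈ LinearMap.range p ⊔ LinearMap.range (LinearMap.id + σ) := by
      rw [hsup, ← hsup']
      exact Submodule.mem_sup_left ⟨u, rfl⟩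
    obtain ⟨a, ha, c, hc, hac⟩ := Submodule.mem_sup.mp h2
    obtain ⟨w, hw⟩ := hc
    rw [LinearMap.add_apply, LinearMap.id_apply] at hw
    rw [← hac, ← hw, map_add, hrad w, add_zero]
    have := hx ⟨a, ha⟩
    simpa using this
  exact ⟨hnd, B.isCompl_orthogonal_of_restrict_nondegenerate hrefl hnd⟩
end
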